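/- Let 0 < γ_b < γ_t < 1, Ae > 0, σ₀ > 0, σ > 0, and let 0 < z_th < Ae. Define p₀ = (1−γ_b)·Q(z_th/σ₀) + γ_b·Q((z_th−Ae)/√(σ₀²+σ²)) and p₁ = (1−γ_t)·Q(z_th/σ₀) + γ_t·Q((z_th−Ae)/√(σ₀²+σ²)). Then the following four inequalities hold: 1 < (1−p₀)/(1−p₁) < (1−γ_b)/(1−γ_t) and γ_b/γ_t < p₀/p₁ < 1. -/
import Mathlib

open MeasureTheory Real Set

/-- The Gaussian tail function `Q(x) = ∫_x^∞ (1/√(2π)) e^{−u²/2} du`. -/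
noncomputable def gaussQ (x : ℝ) : ℝ :=
  ∫ u in Set.Ioi x, (Real.sqrt (2 * Real.pi))⁻¹ * Real.exp (-u ^ 2 / 2)

lemma gpdf_int : Integrable (fun u : ℝ => (Real.sqrt (2 * Real.pi))⁻¹ * Real.exp (-u ^ 2 / 2)) := by
  have h := (integrable_exp_neg_mul_sq (by norm_num : (0:ℝ) < 1/2)).const_mul
    (Real.sqrt (2 * Real.pi))⁻¹
  convert h using 2 with u
  ring_nf

lemma gpdf_pos (u : ℝ) : 0 < (Real.sqrt (2 * Real.pi))⁻¹ * Real.exp (-u ^ 2 / 2) := by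
  have : 0 < Real.sqrt (2 * Real.pi) := Real.sqrt_pos.2 (by positivity)
  positivity

lemma gpdf_supp : Function.support
    (fun u : ℝ => (Real.sqrt (2 * Real.pi))⁻¹ * Real.exp (-u ^ 2 / 2)) = univ := by
  ext u; exact iff_of_true (gpdf_pos u).ne' trivial

lemma gpdf_setInt_pos {s : Set ℝ} (hs : 0 < volume s) :
    0 < ∫ u in s, (Real.sqrt (2 * Real.pi))⁻¹ * Real.exp (-u ^ 2 / 2) := by
  rw [setIntegral_pos_iff_support_of_nonneg_ae]
  · rw [gpdf_supp]; simpa using hs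
  · filter_upwards with u using (gpdf_pos u).le
  · exact gpdf_int.integrableOn

lemma gpdf_total : (∫ u : ℝ, (Real.sqrt (2 * Real.pi))⁻¹ * Real.exp (-u ^ 2 / 2)) = 1 := by
  have h := integral_gaussian (1/2)
  have h2 : (∫ u : ℝ, Real.exp (-u ^ 2 / 2)) = Real.sqrt (2 * Real.pi) := by
    rw [show Real.sqrt (2 * Real.pi) = Real.sqrt (Real.pi / (1/2)) by norm_num [mul_comm]]
    rw [← h]; congr 1 with u; ring_nf
  rw [integral_const_mul, h2, inv_mul_cancel₀ (Real.sqrt_pos.2 (by positivity)).ne']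

lemma gaussQ_pos (x : ℝ) : 0 < gaussQ x :=
  gpdf_setInt_pos (by simp)

lemma gaussQ_lt_one (x : ℝ) : gaussQ x < 1 := by
  have hsplit := intervalIntegral.integral_Iic_add_Ioi (b := x) (μ := volume)
    (gpdf_int.integrableOn) (gpdf_int.integrableOn)
  rw [gpdf_total] at hsplit
  have hpos : 0 < ∫ u in Iic x, (Real.sqrt (2 * Real.pi))⁻¹ * Real.exp (-u ^ 2 / 2) :=
    gpdf_setInt_pos (by simp)
  rw [gaussQ]; linarith

lemma gaussQ_strictAnti : StrictAnti gaussQ := by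
  intro x y hxy
  have hsplit : gaussQ x = (∫ u in Ioc x y,
      (Real.sqrt (2 * Real.pi))⁻¹ * Real.exp (-u ^ 2 / 2)) + gaussQ y := by
    rw [gaussQ, gaussQ, ← setIntegral_union (Ioc_disjoint_Ioi le_rfl) measurableSet_Ioi
      gpdf_int.integrableOn gpdf_int.integrableOn, Ioc_union_Ioi_eq_Ioi hxy.le]
  have hpos : 0 < ∫ u in Ioc x y, (Real.sqrt (2 * Real.pi))⁻¹ * Real.exp (-u ^ 2 / 2) :=
    gpdf_setInt_pos (by simp [hxy])
  linarith

theorem stmt_14 (γb γt Ae σ0 σ zth : ℝ)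
    (hγb : 0 < γb) (hγbt : γb < γt) (hγt : γt < 1)
    (hAe : 0 < Ae) (hσ0 : 0 < σ0) (hσ : 0 < σ)
    (hz1 : 0 < zth) (hz2 : zth < Ae)
    (p0 p1 : ℝ)
    (hp0 : p0 = (1 - γb) * gaussQ (zth / σ0) +
      γb * gaussQ ((zth - Ae) / Real.sqrt (σ0 ^ 2 + σ ^ 2)))
    (hp1 : p1 = (1 - γt) * gaussQ (zth / σ0) +
      γt * gaussQ ((zth - Ae) / Real.sqrt (σ0 ^ 2 + σ ^ 2))) :
    1 < (1 - p0) / (1 - p1) ∧ (1 - p0) / (1 - p1) < (1 - γb) / (1 - γt) ∧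
      γb / γt < p0 / p1 ∧ p0 / p1 < 1 := by
  set a := gaussQ (zth / σ0) with ha
  set b := gaussQ ((zth - Ae) / Real.sqrt (σ0 ^ 2 + σ ^ 2)) with hb
  have hapos : 0 < a := gaussQ_pos _
  have hbpos : 0 < b := gaussQ_pos _
  have hb1 : b < 1 := gaussQ_lt_one _
  have ha1 : a < 1 := gaussQ_lt_one _
  have hab : a < b := by
    apply gaussQ_strictAnti
    have hs : 0 < Real.sqrt (σ0 ^ 2 + σ ^ 2) := Real.sqrt_pos.2 (by positivity)
    have : (zth - Ae) / Real.sqrt (σ0 ^ 2 + σ ^ 2) < 0 := div_neg_of_neg_of_pos (by linarith) hs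
    have : 0 < zth / σ0 := div_pos hz1 hσ0
    linarith
  have h01 : p0 < p1 := by rw [hp0, hp1]; nlinarith
  have hp1lt : p1 < 1 := by rw [hp1]; nlinarith
  have hp0pos : 0 < p0 := by rw [hp0]; nlinarith
  have h1p1 : 0 < 1 - p1 := by linarith
  refine ⟨?_, ?_, ?_, ?_⟩
  · rw [lt_div_iff₀ h1p1]; linarith
  · rw [div_lt_div_iff₀ h1p1 (by linarith)]
    rw [hp0, hp1]; nlinarith
  · rw [div_lt_div_iff₀ (hγb.trans hγbt) (by rw [hp1]; nlinarith)]
    rw [hp0, hp1]; nlinarith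
  · rw [div_lt_one (by rw [hp1]; nlinarith)]; exact h01
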